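/- Let μ ∈ Λ(n,d) and λ ∈ Λ(m,d), and let S be the set of n×m matrices with nonnegative integer entries having row sums μ and column sums λ, each read (row by row) as an element ν of Λ(nm,d). Then the Kronecker product M^μ ⊗_k M^λ, with S_d acting diagonally, is isomorphic as a kS_d-module to ⊕_{ν∈S} M^ν. -/

import Mathlib

/-!
**Statement 13.**  Kronecker products of permutation modules for the symmetric group.
`Λ(n,d)` is the set of sequences of `n` nonnegative integers summing to `d`; a composition
is presented by a "coloring" `c : Fin d → Fin n` realizing it, with Young subgroup
`S_λ ≤ S_d` the stabilizer of the coloring; `M^λ := k[S_d/S_λ]` is the permutation module.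
-/

open CategoryTheory

noncomputable section

variable (k : Type) [CommRing k] (d : ℕ)

/-- The Young subgroup of `S_d` determined by a coloring `c : Fin d → Fin n`. -/
def youngSubgroup {n : ℕ} (c : Fin d → Fin n) : Subgroup (Equiv.Perm (Fin d)) where
  carrier := {σ | ∀ i, c (σ i) = c i}
  mul_mem' := fun {σ τ} hσ hτ i => by
    simp only [Equiv.Perm.mul_apply]
    rw [hσ (τ i), hτ i]
  one_mem' := fun i => rfl
  inv_mem' := fun {σ} hσ i => by
    conv_rhs => rw [← Equiv.apply_symm_apply σ i]
    exact (hσ (σ⁻¹ i)).symm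

/-- A coloring `c : Fin d → Fin n` realizes `λ ∈ Λ(n,d)` if exactly `λ_j` indices have
color `j`. -/
def realizes {n : ℕ} (c : Fin d → Fin n) (lam : Fin n → ℕ) : Prop :=
  ∀ j, (Finset.univ.filter fun i => c i = j).card = lam j

/-- The permutation module `M^λ = k[S_d/S_λ]` on the left cosets of a Young subgroup. -/
def permModule {n : ℕ} (c : Fin d → Fin n) : Rep k (Equiv.Perm (Fin d)) :=
  Rep.of (Representation.ofMulAction k (Equiv.Perm (Fin d))
    (Equiv.Perm (Fin d) ⧸ youngSubgroup d c))

open scoped DirectSum in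
/-- The direct sum of a family of representations of a group, as an object of `Rep k G`. -/
def repDirectSum {G : Type} [Monoid G] {I : Type} (F : I → Rep.{0} k G) : Rep.{0} k G :=
  Rep.of (X := ⨁ i : I, F i)
    { toFun := fun g => DFinsupp.mapRange.linearMap (fun i => (F i).ρ g)
      map_one' := by
        have h : (fun i => (F i).ρ 1) = fun i => (LinearMap.id : F i →ₗ[k] F i) := by
          funext i; rw [map_one]; rfl
        show DFinsupp.mapRange.linearMap _ = _
        rw [h]
        exact DFinsupp.mapRange.linearMap_id
      map_mul' := fun g g' => by
        have h : (fun i => (F i).ρ (g * g'))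
            = fun i => ((F i).ρ g).comp ((F i).ρ g') := by
          funext i; rw [map_mul]; rfl
        show DFinsupp.mapRange.linearMap _ = _
        rw [h]
        exact DFinsupp.mapRange.linearMap_comp _ _ }

/-- Reading an `n × m` matrix position row by row as an index in `Fin (n*m)`. -/
def rowMajor (n m : ℕ) : Fin n × Fin m ≃ Fin (n * m) :=
  (Equiv.prodComm (Fin n) (Fin m)).trans (finProdFinEquiv.trans (finCongr (mul_comm m n)))

/-- The set of `n × m` matrices with nonnegative integer entries, row sums `μ` and column
sums `λ`. -/
def matrixSet {n m : ℕ} (mu : Fin n → ℕ) (lam : Fin m → ℕ) : Type :=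
  {M : Fin n → Fin m → ℕ // (∀ r, ∑ c, M r c = mu r) ∧ (∀ c, ∑ r, M r c = lam c)}

namespace StmtAux


/-- The number of indices with color `b`. -/
def cnt {d : ℕ} {β : Type*} [DecidableEq β] (f : Fin d → β) (b : β) : ℕ :=
  (Finset.univ.filter fun i => f i = b).card

lemma realizes_iff {d n : ℕ} (c : Fin d → Fin n) (t : Fin n → ℕ) :
    realizes d c t ↔ ∀ j, cnt c j = t j := Iff.rfl

lemma cnt_comp_perm {d : ℕ} {β : Type*} [DecidableEq β] (f : Fin d → β) (σ : Equiv.Perm (Fin d))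
    (b : β) : cnt (fun i => f (σ i)) b = cnt f b := by
  unfold cnt
  apply Finset.card_bij' (fun i _ => σ i) (fun i _ => σ⁻¹ i) <;>
    simp [Finset.mem_filter]

lemma cnt_comp_equiv {d : ℕ} {β γ : Type*} [DecidableEq β] [DecidableEq γ] (e : β ≃ γ)
    (f : Fin d → β) (b : β) : cnt (fun i => e (f i)) (e b) = cnt f b := by
  unfold cnt
  congr 1
  apply Finset.filter_congr
  intro i _
  simp [e.injective.eq_iff]

lemma exists_comp_perm_eq {d : ℕ} {β : Type*} [DecidableEq β] [Fintype β] {f g : Fin d → β}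
    (h : ∀ b, cnt f b = cnt g b) : ∃ σ : Equiv.Perm (Fin d), ∀ i, f (σ i) = g i := by
  have hcard : ∀ b, Fintype.card {i // g i = b} = Fintype.card {i // f i = b} := by
    intro b
    rw [Fintype.card_subtype, Fintype.card_subtype]
    exact (h b).symm
  have e : ∀ b, {i // g i = b} ≃ {i // f i = b} := fun b => Fintype.equivOfCardEq (hcard b)
  refine ⟨(Equiv.sigmaFiberEquiv g).symm.trans
    ((Equiv.sigmaCongrRight e).trans (Equiv.sigmaFiberEquiv f)), fun i => ?_⟩
  exact ((e (g i)) ⟨i, rfl⟩).2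



lemma cnt_inv_perm {d : ℕ} {β : Type*} [DecidableEq β] (f : Fin d → β) (σ : Equiv.Perm (Fin d))
    (b : β) : cnt (fun i => f (σ⁻¹ i)) b = cnt f b := cnt_comp_perm f σ⁻¹ b


/-- The coset space of a Young subgroup is equivalent to the set of colorings realizing
the same composition. -/
def colEquiv (d : ℕ) {N : ℕ} (c : Fin d → Fin N) (t : Fin N → ℕ) (hc : realizes d c t) :
    (Equiv.Perm (Fin d) ⧸ youngSubgroup d c) ≃ {f : Fin d → Fin N // realizes d f t} where
  toFun := Quotient.lift
    (fun g => (⟨fun i => c (g⁻¹ i), fun j => (cnt_inv_perm c g j).trans (hc j)⟩ :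
      {f : Fin d → Fin N // realizes d f t}))
    (by
      intro a b hab
      replace hab : a⁻¹ * b ∈ youngSubgroup d c := QuotientGroup.leftRel_apply.mp hab
      refine Subtype.ext (funext fun i => ?_)
      have := hab (b⁻¹ i)
      simp only [Equiv.Perm.mul_apply] at this
      simpa using this)
  invFun f := QuotientGroup.mk
    (Classical.choose (exists_comp_perm_eq (f := c) (g := f.1)
      (fun b => (hc b).trans (f.2 b).symm)))⁻¹
  left_inv := by
    refine fun q => QuotientGroup.induction_on q (fun g => ?_)
    set f : {f : Fin d → Fin N // realizes d f t} :=
      ⟨fun i => c (g⁻¹ i), fun j => (cnt_inv_perm c g j).trans (hc j)⟩ with hf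
    have hσ := Classical.choose_spec (exists_comp_perm_eq (f := c) (g := f.1)
      (fun b => (hc b).trans (f.2 b).symm))
    set σ := Classical.choose (exists_comp_perm_eq (f := c) (g := f.1)
      (fun b => (hc b).trans (f.2 b).symm))
    show QuotientGroup.mk σ⁻¹ = QuotientGroup.mk g
    refine QuotientGroup.eq.mpr (fun i => ?_)
    simp only [inv_inv, Equiv.Perm.mul_apply]
    have := hσ (g i)
    simp only [hf] at this
    simpa using this
  right_inv := by
    intro f
    have hσ := Classical.choose_spec (exists_comp_perm_eq (f := c) (g := f.1)
      (fun b => (hc b).trans (f.2 b).symm))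
    refine Subtype.ext (funext fun i => ?_)
    exact hσ i

lemma colEquiv_mk (d : ℕ) {N : ℕ} (c : Fin d → Fin N) (t : Fin N → ℕ) (hc : realizes d c t)
    (g : Equiv.Perm (Fin d)) :
    (colEquiv d c t hc (QuotientGroup.mk g)).1 = fun i => c (g⁻¹ i) := rfl

lemma colEquiv_smul (d : ℕ) {N : ℕ} (c : Fin d → Fin N) (t : Fin N → ℕ) (hc : realizes d c t)
    (g : Equiv.Perm (Fin d)) (q : Equiv.Perm (Fin d) ⧸ youngSubgroup d c) :
    (colEquiv d c t hc (g • q)).1 = fun i => (colEquiv d c t hc q).1 (g⁻¹ i) := by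
  refine QuotientGroup.induction_on q (fun h => ?_)
  have : g • (QuotientGroup.mk h : Equiv.Perm (Fin d) ⧸ youngSubgroup d c)
      = QuotientGroup.mk (g * h) := rfl
  rw [this, colEquiv_mk, colEquiv_mk]
  funext i
  simp [mul_inv_rev]



/-- The action of a permutation on colorings, restricted to those realizing `t`. -/
def shiftCol {d N : ℕ} {t : Fin N → ℕ} (g : Equiv.Perm (Fin d))
    (f : {f : Fin d → Fin N // realizes d f t}) : {f : Fin d → Fin N // realizes d f t} :=
  ⟨fun i => f.1 (g⁻¹ i), fun j => (cnt_inv_perm f.1 g j).trans (f.2 j)⟩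


lemma colEquiv_apply_smul (d : ℕ) {N : ℕ} (c : Fin d → Fin N) (t : Fin N → ℕ) (hc : realizes d c t)
    (g : Equiv.Perm (Fin d)) (q : Equiv.Perm (Fin d) ⧸ youngSubgroup d c) :
    colEquiv d c t hc (g • q) = shiftCol g (colEquiv d c t hc q) :=
  Subtype.ext (colEquiv_smul d c t hc g q)

lemma colEquiv_symm_shift (d : ℕ) {N : ℕ} (c : Fin d → Fin N) (t : Fin N → ℕ) (hc : realizes d c t)
    (g : Equiv.Perm (Fin d)) (f : {f : Fin d → Fin N // realizes d f t}) :
    (colEquiv d c t hc).symm (shiftCol g f) = g • (colEquiv d c t hc).symm f := by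
  rw [Equiv.symm_apply_eq, colEquiv_apply_smul, Equiv.apply_symm_apply]




lemma cnt_fst {d n m : ℕ} (h : Fin d → Fin n × Fin m) (r : Fin n) :
    cnt (fun i => (h i).1) r = ∑ c, cnt h (r, c) := by
  unfold cnt
  rw [Finset.card_eq_sum_card_fiberwise (f := fun i => (h i).2) (t := Finset.univ)
    (fun i _ => Finset.mem_univ _)]
  refine Finset.sum_congr rfl fun c _ => ?_
  rw [Finset.filter_filter]
  congr 1
  apply Finset.filter_congr
  intro i _
  simp [Prod.ext_iff]

lemma cnt_snd {d n m : ℕ} (h : Fin d → Fin n × Fin m) (c : Fin m) :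
    cnt (fun i => (h i).2) c = ∑ r, cnt h (r, c) := by
  unfold cnt
  rw [Finset.card_eq_sum_card_fiberwise (f := fun i => (h i).1) (t := Finset.univ)
    (fun i _ => Finset.mem_univ _)]
  refine Finset.sum_congr rfl fun r _ => ?_
  rw [Finset.filter_filter]
  congr 1
  apply Finset.filter_congr
  intro i _
  simp [Prod.ext_iff, and_comm]

lemma cnt_rowMajor_symm {d n m : ℕ} (f : Fin d → Fin (n * m)) (p : Fin n × Fin m) :
    cnt (fun i => (rowMajor n m).symm (f i)) p = cnt f (rowMajor n m p) := by
  unfold cnt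
  congr 1
  apply Finset.filter_congr
  intro i _
  simp [Equiv.symm_apply_eq]

/-- The composition of `Fin (n*m)` obtained by reading a matrix row by row. -/
def nu {n m : ℕ} {mu : Fin n → ℕ} {lam : Fin m → ℕ} (M : matrixSet mu lam) : Fin (n * m) → ℕ :=
  fun j => M.1 ((rowMajor n m).symm j).1 ((rowMajor n m).symm j).2

lemma sigma_eq {n m d : ℕ} {mu : Fin n → ℕ} {lam : Fin m → ℕ} (M₁ M₂ : matrixSet mu lam)
    (h : M₁ = M₂) (f₁ : {f : Fin d → Fin (n * m) // realizes d f (nu M₁)})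
    (f₂ : {f : Fin d → Fin (n * m) // realizes d f (nu M₂)}) (hf : f₁.1 = f₂.1) :
    (⟨M₁, f₁⟩ : Σ M : matrixSet mu lam, {f : Fin d → Fin (n * m) // realizes d f (nu M)})
      = ⟨M₂, f₂⟩ := by
  subst h
  exact congrArg _ (Subtype.ext hf)


/-- The combinatorial heart: pairs of colorings realizing `μ` and `λ` correspond to
matrices `M` with row sums `μ`, column sums `λ`, together with a coloring realizing the
composition read off from `M`. -/
def combEquiv (d : ℕ) {n m : ℕ} (mu : Fin n → ℕ) (lam : Fin m → ℕ) :
    ({a : Fin d → Fin n // realizes d a mu} × {b : Fin d → Fin m // realizes d b lam}) ≃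
      Σ M : matrixSet mu lam, {f : Fin d → Fin (n * m) // realizes d f (nu M)} where
  toFun p :=
    ⟨⟨fun r c => cnt (fun i => rowMajor n m (p.1.1 i, p.2.1 i)) (rowMajor n m (r, c)),
      fun r => by
        have h1 : ∀ c, cnt (fun i => rowMajor n m (p.1.1 i, p.2.1 i)) (rowMajor n m (r, c))
            = cnt (fun i => (p.1.1 i, p.2.1 i)) (r, c) := fun c =>
          cnt_comp_equiv (rowMajor n m) (fun i => (p.1.1 i, p.2.1 i)) (r, c)
        simp only [h1]
        rw [← cnt_fst (fun i => (p.1.1 i, p.2.1 i)) r]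
        exact p.1.2 r,
      fun c => by
        have h1 : ∀ r, cnt (fun i => rowMajor n m (p.1.1 i, p.2.1 i)) (rowMajor n m (r, c))
            = cnt (fun i => (p.1.1 i, p.2.1 i)) (r, c) := fun r =>
          cnt_comp_equiv (rowMajor n m) (fun i => (p.1.1 i, p.2.1 i)) (r, c)
        simp only [h1]
        rw [← cnt_snd (fun i => (p.1.1 i, p.2.1 i)) c]
        exact p.2.2 c⟩,
     ⟨fun i => rowMajor n m (p.1.1 i, p.2.1 i), fun j => by
        show cnt (fun i => rowMajor n m (p.1.1 i, p.2.1 i)) j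
          = cnt (fun i => rowMajor n m (p.1.1 i, p.2.1 i))
            (rowMajor n m (((rowMajor n m).symm j).1, ((rowMajor n m).symm j).2))
        congr 1
        simp⟩⟩
  invFun Mf :=
    (⟨fun i => ((rowMajor n m).symm (Mf.2.1 i)).1, fun r => by
        show cnt (fun i => ((rowMajor n m).symm (Mf.2.1 i)).1) r = mu r
        rw [cnt_fst (fun i => (rowMajor n m).symm (Mf.2.1 i)) r]
        have : ∀ c, cnt (fun i => (rowMajor n m).symm (Mf.2.1 i)) (r, c) = Mf.1.1 r c := by
          intro c
          rw [cnt_rowMajor_symm,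
            show cnt Mf.2.1 (rowMajor n m (r, c)) = nu Mf.1 (rowMajor n m (r, c)) from
              Mf.2.2 _]
          simp [nu]
        simp only [this]
        exact Mf.1.2.1 r⟩,
     ⟨fun i => ((rowMajor n m).symm (Mf.2.1 i)).2, fun c => by
        show cnt (fun i => ((rowMajor n m).symm (Mf.2.1 i)).2) c = lam c
        rw [cnt_snd (fun i => (rowMajor n m).symm (Mf.2.1 i)) c]
        have : ∀ r, cnt (fun i => (rowMajor n m).symm (Mf.2.1 i)) (r, c) = Mf.1.1 r c := by
          intro r
          rw [cnt_rowMajor_symm,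
            show cnt Mf.2.1 (rowMajor n m (r, c)) = nu Mf.1 (rowMajor n m (r, c)) from
              Mf.2.2 _]
          simp [nu]
        simp only [this]
        exact Mf.1.2.2 c⟩)
  left_inv p := by
    refine Prod.ext (Subtype.ext (funext fun i => ?_)) (Subtype.ext (funext fun i => ?_)) <;>
      simp
  right_inv Mf := by
    obtain ⟨M, f⟩ := Mf
    have hjoint : (fun i => rowMajor n m
        (((rowMajor n m).symm (f.1 i)).1, ((rowMajor n m).symm (f.1 i)).2)) = f.1 := by
      funext i
      simp
    refine sigma_eq _ _ (Subtype.ext (funext fun r => funext fun c => ?_)) _ _ hjoint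
    show cnt (fun i => rowMajor n m
        (((rowMajor n m).symm (f.1 i)).1, ((rowMajor n m).symm (f.1 i)).2))
      (rowMajor n m (r, c)) = M.1 r c
    rw [show (fun i => rowMajor n m
        (((rowMajor n m).symm (f.1 i)).1, ((rowMajor n m).symm (f.1 i)).2)) = f.1 from hjoint,
      show cnt f.1 (rowMajor n m (r, c)) = nu M (rowMajor n m (r, c)) from f.2 _]
    simp [nu]

lemma combEquiv_symm_shift (d : ℕ) {n m : ℕ} (mu : Fin n → ℕ) (lam : Fin m → ℕ) (g : Equiv.Perm (Fin d)) (M : matrixSet mu lam)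
    (f : {f : Fin d → Fin (n * m) // realizes d f (nu M)}) :
    (combEquiv d mu lam).symm ⟨M, shiftCol g f⟩ =
      (shiftCol g ((combEquiv d mu lam).symm ⟨M, f⟩).1,
       shiftCol g ((combEquiv d mu lam).symm ⟨M, f⟩).2) :=
  rfl

/-- The full equivariant bijection of basis sets. -/
def bigEquiv (d : ℕ) {n m : ℕ} (mu : Fin n → ℕ) (lam : Fin m → ℕ)
    (cmu : Fin d → Fin n) (hcmu : realizes d cmu mu)
    (clam : Fin d → Fin m) (hclam : realizes d clam lam)
    (cM : matrixSet mu lam → (Fin d → Fin (n * m)))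
    (hreal : ∀ M, realizes d (cM M) (nu M)) :
    ((Equiv.Perm (Fin d) ⧸ youngSubgroup d cmu) ×
        (Equiv.Perm (Fin d) ⧸ youngSubgroup d clam)) ≃
      Σ M : matrixSet mu lam, Equiv.Perm (Fin d) ⧸ youngSubgroup d (cM M) :=
  (Equiv.prodCongr (colEquiv d cmu mu hcmu) (colEquiv d clam lam hclam)).trans
    ((combEquiv d mu lam).trans
      (Equiv.sigmaCongrRight fun M => (colEquiv d (cM M) (nu M) (hreal M)).symm))

lemma bigEquiv_symm_smul (d : ℕ) {n m : ℕ} (mu : Fin n → ℕ) (lam : Fin m → ℕ)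
    (cmu : Fin d → Fin n) (hcmu : realizes d cmu mu)
    (clam : Fin d → Fin m) (hclam : realizes d clam lam)
    (cM : matrixSet mu lam → (Fin d → Fin (n * m)))
    (hreal : ∀ M, realizes d (cM M) (nu M)) (g : Equiv.Perm (Fin d))
    (M : matrixSet mu lam) (q : Equiv.Perm (Fin d) ⧸ youngSubgroup d (cM M)) :
    (bigEquiv d mu lam cmu hcmu clam hclam cM hreal).symm ⟨M, g • q⟩ =
      (g • ((bigEquiv d mu lam cmu hcmu clam hclam cM hreal).symm ⟨M, q⟩).1,
       g • ((bigEquiv d mu lam cmu hcmu clam hclam cM hreal).symm ⟨M, q⟩).2) := by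
  have h3 : ∀ (y : Equiv.Perm (Fin d) ⧸ youngSubgroup d (cM M)),
      (Equiv.sigmaCongrRight fun M => (colEquiv d (cM M) (nu M) (hreal M)).symm).symm
        ⟨M, y⟩ = ⟨M, colEquiv d (cM M) (nu M) (hreal M) y⟩ := fun y => rfl
  simp only [bigEquiv, Equiv.symm_trans_apply, h3,
    colEquiv_apply_smul d (cM M) (nu M) (hreal M), combEquiv_symm_shift,
    Equiv.prodCongr_symm, Equiv.prodCongr_apply, Prod.map_fst, Prod.map_snd,
    colEquiv_symm_shift, Prod.map]

end StmtAux

set_option maxHeartbeats 1000000 in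
open MonoidalCategory in
/--
**Statement 13.** Let `μ ∈ Λ(n,d)` and `λ ∈ Λ(m,d)`, and let `S` be the set of `n×m`
matrices with nonnegative integer entries having row sums `μ` and column sums `λ`, each
read (row by row) as an element `ν` of `Λ(nm,d)`.  Then the Kronecker product
`M^μ ⊗_k M^λ`, with `S_d` acting diagonally (the monoidal tensor product of `Rep k S_d`),
is isomorphic as a `kS_d`-module to `⊕_{ν∈S} M^ν`.
-/
theorem permutation_module_kronecker (k : Type) [CommRing k] (d : ℕ)
    {n m : ℕ} (mu : Fin n → ℕ) (lam : Fin m → ℕ)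
    (hmu : ∑ i, mu i = d) (hlam : ∑ j, lam j = d)
    (cmu : Fin d → Fin n) (hcmu : realizes d cmu mu)
    (clam : Fin d → Fin m) (hclam : realizes d clam lam)
    (cM : matrixSet mu lam → (Fin d → Fin (n * m)))
    (hcM : ∀ (M : matrixSet mu lam) (p : Fin n × Fin m),
      (Finset.univ.filter fun i => cM M i = rowMajor n m p).card = M.1 p.1 p.2) :
    Nonempty ((permModule k d cmu ⊗ permModule k d clam : Rep k (Equiv.Perm (Fin d)))
      ≅ repDirectSum k (fun M : matrixSet mu lam => permModule k d (cM M))) := by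
  classical
  have hreal : ∀ M : matrixSet mu lam, realizes d (cM M) (StmtAux.nu M) := fun M j => by
    simpa [StmtAux.nu] using hcM M ((rowMajor n m).symm j)
  set G := Equiv.Perm (Fin d) with hG
  let E := StmtAux.bigEquiv d mu lam cmu hcmu clam hclam cM hreal
  let ℓ₀ : DirectSum (matrixSet mu lam) (fun M => (G ⧸ youngSubgroup d (cM M)) →₀ k) ≃ₗ[k]
      TensorProduct k ((G ⧸ youngSubgroup d cmu) →₀ k) ((G ⧸ youngSubgroup d clam) →₀ k) :=
    (sigmaFinsuppLequivDFinsupp k).symm.trans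
      ((Finsupp.domLCongr E.symm).trans (finsuppTensorFinsupp' k _ _).symm)
  have hℓ₀ : ∀ (M : matrixSet mu lam) (w : G ⧸ youngSubgroup d (cM M)),
      ℓ₀ (DFinsupp.single M (Finsupp.single w (1 : k)))
        = Finsupp.single (E.symm ⟨M, w⟩).1 (1 : k) ⊗ₜ[k]
            Finsupp.single (E.symm ⟨M, w⟩).2 (1 : k) := by
    intro M w
    have hsig : (sigmaFinsuppLequivDFinsupp (ι := matrixSet mu lam)
          (η := fun M : matrixSet mu lam => G ⧸ youngSubgroup d (cM M)) (N := k) k).symm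
        (DFinsupp.single (β := fun M : matrixSet mu lam => (G ⧸ youngSubgroup d (cM M)) →₀ k)
          M (Finsupp.single w (1 : k)))
          = Finsupp.single ⟨M, w⟩ (1 : k) := by
      rw [LinearEquiv.symm_apply_eq]
      simp
    have hten := finsuppTensorFinsupp'_symm_single_mul (R := k)
      (ι := G ⧸ youngSubgroup d cmu) (κ := G ⧸ youngSubgroup d clam)
      (E.symm ⟨M, w⟩) 1 1
    rw [mul_one] at hten
    show (finsuppTensorFinsupp' k _ _).symm
        ((Finsupp.domLCongr E.symm)
          ((sigmaFinsuppLequivDFinsupp k).symm (DFinsupp.single M (Finsupp.single w 1)))) = _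
    rw [hsig, Finsupp.domLCongr_single, hten]
  let ℓ : DirectSum (matrixSet mu lam) (fun M => MonoidAlgebra k (G ⧸ youngSubgroup d (cM M))) ≃ₗ[k]
      TensorProduct k (MonoidAlgebra k (G ⧸ youngSubgroup d cmu))
        (MonoidAlgebra k (G ⧸ youngSubgroup d clam)) :=
    (DFinsupp.mapRange.linearEquiv (fun M => MonoidAlgebra.coeffLinearEquiv k)).trans
      (ℓ₀.trans (TensorProduct.congr (MonoidAlgebra.coeffLinearEquiv k).symm
        (MonoidAlgebra.coeffLinearEquiv k).symm))
  have hℓ : ∀ (M : matrixSet mu lam) (w : G ⧸ youngSubgroup d (cM M)),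
      ℓ (DFinsupp.single M (MonoidAlgebra.single w (1 : k)))
        = MonoidAlgebra.single (E.symm ⟨M, w⟩).1 (1 : k) ⊗ₜ[k]
            MonoidAlgebra.single (E.symm ⟨M, w⟩).2 (1 : k) := by
    intro M w
    show TensorProduct.congr (MonoidAlgebra.coeffLinearEquiv k).symm
        (MonoidAlgebra.coeffLinearEquiv k).symm
        (ℓ₀ (DFinsupp.mapRange
          (β₁ := fun M : matrixSet mu lam => MonoidAlgebra k (G ⧸ youngSubgroup d (cM M)))
          (fun M x => MonoidAlgebra.coeffLinearEquiv k x) (fun M => map_zero _)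
          (DFinsupp.single M (MonoidAlgebra.single w (1 : k))))) = _
    rw [DFinsupp.mapRange_single, MonoidAlgebra.coeffLinearEquiv_apply, MonoidAlgebra.coeff_single,
      hℓ₀, TensorProduct.congr_tmul]
    rfl
  refine ⟨(Rep.mkIso (ρ := (repDirectSum k fun M => permModule k d (cM M)).ρ)
    (σ := (permModule k d cmu ⊗ permModule k d clam).ρ) (Representation.Equiv.mk ℓ ?_)).symm⟩
  intro g
  let gp : Equiv.Perm (Fin d) := g
  refine DFinsupp.lhom_ext' fun M => ?_
  refine MonoidAlgebra.lhom_ext' fun w => ?_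
  refine LinearMap.ext_ring ?_
  show ℓ (DFinsupp.mapRange
        (β₁ := fun M : matrixSet mu lam => MonoidAlgebra k (G ⧸ youngSubgroup d (cM M)))
        (β₂ := fun M : matrixSet mu lam => MonoidAlgebra k (G ⧸ youngSubgroup d (cM M)))
        (fun M => ⇑(Representation.ofMulAction k (Equiv.Perm (Fin d))
          (Equiv.Perm (Fin d) ⧸ youngSubgroup d (cM M)) gp)) (fun M => map_zero _)
        (DFinsupp.single M (MonoidAlgebra.single w (1 : k))))
    = TensorProduct.map (Representation.ofMulAction k (Equiv.Perm (Fin d))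
          (Equiv.Perm (Fin d) ⧸ youngSubgroup d cmu) gp)
        (Representation.ofMulAction k (Equiv.Perm (Fin d))
          (Equiv.Perm (Fin d) ⧸ youngSubgroup d clam) gp)
        (ℓ (DFinsupp.single M (MonoidAlgebra.single w (1 : k))))
  rw [DFinsupp.mapRange_single, Representation.ofMulAction_single, hℓ, hℓ, TensorProduct.map_tmul,
    Representation.ofMulAction_single, Representation.ofMulAction_single]
  have hEs := StmtAux.bigEquiv_symm_smul d mu lam cmu hcmu clam hclam cM hreal gp M w
  rw [show E.symm ⟨M, gp • w⟩ = _ from hEs]
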